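/- Let X be a Fréchet sequence space over ℤ in which the sequence (e_n)_{n∈ℤ} of canonical vectors is a basis, let w := (w_n)_{n∈ℤ} be a sequence of nonzero scalars, and suppose the bilateral weighted backward shift B_w((x_n)_{n∈ℤ}) := (w_n x_{n+1})_{n∈ℤ} is a well-defined (continuous linear) operator on X. Then B_w is Li-Yorke chaotic if and only if both of the following hold: (a) the sequence (w_{-n} ⋯ w_{-1} e_{-n})_{n∈ℕ} has a subsequence converging to zero in X; and (b) there is a vector (x_n)_{n∈ℤ} ∈ X such that the sequence ( (w_j ⋯ w_{j+n-1} x_{j+n})_{j∈ℤ} )_{n∈ℕ} does not converge to 0 in X as n → ∞. -/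

import Mathlib

open Filter Topology MeasureTheory ENNReal

noncomputable section

def LiYorkePair {M : Type*} [PseudoMetricSpace M] (g : M → M) (x y : M) : Prop :=
  Filter.liminf (fun n : ℕ => edist (g^[n] x) (g^[n] y)) Filter.atTop = 0 ∧
  0 < Filter.limsup (fun n : ℕ => edist (g^[n] x) (g^[n] y)) Filter.atTop

def LiYorkeChaotic {M : Type*} [PseudoMetricSpace M] (g : M → M) : Prop :=
  ∃ S : Set M, ¬ S.Countable ∧ S.Pairwise (LiYorkePair g)

def DenselyLiYorkeChaotic {M : Type*} [PseudoMetricSpace M] (g : M → M) : Prop :=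
  ∃ S : Set M, Dense S ∧ ¬ S.Countable ∧ S.Pairwise (LiYorkePair g)

set_option linter.unusedSectionVars false
set_option maxHeartbeats 1000000

section MetricAux

variable {X : Type} [AddCommGroup X] [MetricSpace X]
variable (hinv : ∀ x y z : X, dist (x + z) (y + z) = dist x y)
include hinv

lemma aux_dist_sub (a b : X) : dist a b = dist (a - b) 0 := by
  have h := hinv (a - b) 0 b
  simpa using h

lemma aux_dist_neg (a : X) : dist (-a) 0 = dist a 0 := by
  have h := hinv (-a) 0 a
  simp only [neg_add_cancel, zero_add] at h
  rw [← h, dist_comm]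

lemma aux_dist_add_le (a b : X) : dist (a + b) 0 ≤ dist a 0 + dist b 0 := by
  have h1 : dist (a + b) b = dist a 0 := by simpa using hinv a 0 b
  calc dist (a + b) 0 ≤ dist (a + b) b + dist b 0 := dist_triangle _ _ _
    _ = dist a 0 + dist b 0 := by rw [h1]

lemma aux_dist_sub_le (a b : X) : dist (a - b) 0 ≤ dist a 0 + dist b 0 := by
  have := aux_dist_add_le hinv a (-b)
  simpa [sub_eq_add_neg, aux_dist_neg hinv b] using this

lemma aux_edist_sub (a b : X) : edist a b = edist (a - b) 0 := by
  rw [edist_dist, edist_dist, ← aux_dist_sub hinv]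

end MetricAux

section FilterAux

variable {X : Type} [MetricSpace X]

lemma aux_liminf_zero_of_tendsto {x0 : X} {f : ℕ → X} {t : ℕ → ℕ}
    (ht : Tendsto t atTop atTop)
    (h : Tendsto (fun k => f (t k)) atTop (nhds x0)) :
    liminf (fun n => edist (f n) x0) atTop = 0 := by
  refine le_antisymm ?_ (zero_le)
  refine le_of_forall_gt_imp_ge_of_dense fun δ hδ => ?_
  refine liminf_le_of_frequently_le' ?_
  rw [frequently_atTop]
  intro m
  obtain ⟨K, hK⟩ := EMetric.tendsto_atTop.mp h δ hδ
  obtain ⟨K', hK'⟩ := (tendsto_atTop_atTop.mp ht) m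
  exact ⟨t (max K K'), hK' _ (le_max_right _ _),
    (hK _ (le_max_left _ _)).le⟩

lemma aux_subseq_of_liminf_zero {x0 : X} {f : ℕ → X}
    (h : liminf (fun n => edist (f n) x0) atTop = 0) :
    ∃ φ : ℕ → ℕ, StrictMono φ ∧ Tendsto (fun k => f (φ k)) atTop (nhds x0) := by
  have hfreq : ∀ k : ℕ, ∃ᶠ n in atTop, edist (f n) x0 < ((k : ENNReal) + 1)⁻¹ := by
    intro k
    by_contra hc
    rw [Filter.not_frequently] at hc
    have hle : ((k : ℝ≥0∞) + 1)⁻¹ ≤ liminf (fun n => edist (f n) x0) atTop := by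
      refine le_liminf_of_le (by isBoundedDefault) ?_
      exact hc.mono fun n hn => not_lt.mp hn
    rw [h] at hle
    simp [ENNReal.inv_eq_zero] at hle
  obtain ⟨φ, hφmono, hφ⟩ := Filter.extraction_forall_of_frequently hfreq
  refine ⟨φ, hφmono, ?_⟩
  rw [EMetric.tendsto_atTop]
  intro ε hε
  obtain ⟨N, hN⟩ := ENNReal.exists_inv_nat_lt hε.ne'
  refine ⟨N + 1, fun k hk => ?_⟩
  refine lt_of_lt_of_le (lt_of_lt_of_le (hφ k) ?_) hN.le
  rw [ENNReal.inv_le_inv]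
  have : (N : ℕ) ≤ k + 1 := by omega
  exact_mod_cast this

lemma aux_not_tendsto_exists_eps {x0 : X} {f : ℕ → X}
    (h : ¬ Tendsto f atTop (nhds x0)) :
    ∃ ε : ℝ, 0 < ε ∧ ∃ᶠ n in atTop, ε ≤ dist (f n) x0 := by
  rw [Metric.tendsto_atTop] at h
  push_neg at h
  obtain ⟨ε, hε, hfr⟩ := h
  exact ⟨ε, hε, frequently_atTop.mpr fun m => by
    obtain ⟨n, hn, hd⟩ := hfr m; exact ⟨n, hn, hd⟩⟩

lemma aux_not_tendsto_iff_limsup {x0 : X} {f : ℕ → X} :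
    (¬ Tendsto f atTop (nhds x0)) ↔ 0 < limsup (fun n => edist (f n) x0) atTop := by
  constructor
  · intro h
    obtain ⟨ε, hε, hfr⟩ := aux_not_tendsto_exists_eps h
    have : ENNReal.ofReal ε ≤ limsup (fun n => edist (f n) x0) atTop := by
      refine le_limsup_of_frequently_le' ?_
      exact hfr.mono fun n hn => by
        rw [edist_dist]; exact ENNReal.ofReal_le_ofReal hn
    exact lt_of_lt_of_le (by simpa using hε) this
  · intro h htend
    have : Tendsto (fun n => edist (f n) x0) atTop (nhds 0) := by
      have := (EMetric.tendsto_atTop).mp htend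
      rw [ENNReal.tendsto_atTop_zero]
      intro ε hε
      have hm : (0:ENNReal) < min ε 1 := lt_min hε zero_lt_one
      obtain ⟨N, hN⟩ := this (min ε 1) hm
      exact ⟨N, fun n hn => le_trans (hN n hn).le (min_le_left _ _)⟩
    rw [this.limsup_eq] at h
    exact lt_irrefl _ h

end FilterAux

section SeqSpace

variable {𝕂 X : Type} [RCLike 𝕂] [AddCommGroup X] [Module 𝕂 X]
    [MetricSpace X] [ContinuousAdd X] [ContinuousSMul 𝕂 X]

/-- partial sum projections -/
def auxSN (ι : X →L[𝕂] (ℤ → 𝕂)) (E : ℤ → X) (N : ℕ) : X →L[𝕂] X :=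
  ∑ m ∈ Finset.Icc (-(N : ℤ)) (N : ℤ), ((ContinuousLinearMap.proj m).comp ι).smulRight (E m)

lemma auxSN_apply (ι : X →L[𝕂] (ℤ → 𝕂)) (E : ℤ → X) (N : ℕ) (x : X) :
    auxSN ι E N x = ∑ m ∈ Finset.Icc (-(N : ℤ)) (N : ℤ), ι x m • E m := by
  simp [auxSN]

variable (ι : X →L[𝕂] (ℤ → 𝕂)) (E : ℤ → X) (hE : ∀ n, ι (E n) = Pi.single n 1)

include hE in
lemma aux_iota_SN (N : ℕ) (x : X) (j : ℤ) :
    ι (auxSN ι E N x) j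
      = if j ∈ Finset.Icc (-(N : ℤ)) (N : ℤ) then ι x j else 0 := by
  rw [auxSN_apply, map_sum]
  have : ∀ m, ι (ι x m • E m) = fun j => ι x m * (Pi.single m (1:𝕂) : ℤ → 𝕂) j := by
    intro m; funext j'; rw [_root_.map_smul, hE]; simp
  rw [Finset.sum_congr rfl fun m _ => this m]
  rw [Finset.sum_apply]
  simp only [Pi.single_apply, mul_ite, mul_one, mul_zero]
  rw [Finset.sum_ite_eq (Finset.Icc (-(N : ℤ)) (N : ℤ)) j (fun m => ι x m)]

end SeqSpace

section SeqSpace2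

variable {𝕂 X : Type} [RCLike 𝕂] [AddCommGroup X] [Module 𝕂 X]
    [MetricSpace X] [ContinuousAdd X] [ContinuousSMul 𝕂 X]
variable (ι : X →L[𝕂] (ℤ → 𝕂)) (E : ℤ → X)
variable (w : ℤ → 𝕂) (B : X →L[𝕂] X)
variable (hι : Function.Injective ι) (hE : ∀ n, ι (E n) = Pi.single n 1)
variable (hB : ∀ (x : X) (n : ℤ), ι (B x) n = w n * ι x (n + 1))

include hB in
lemma aux_iota_pow (n : ℕ) (x : X) (j : ℤ) :
    ι ((B ^ n) x) j = (∏ t ∈ Finset.Icc j (j + n - 1), w t) * ι x (j + n) := by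
  induction n generalizing x j with
  | zero =>
      have : Finset.Icc j (j + (0:ℕ) - 1) = ∅ := Finset.Icc_eq_empty (by omega)
      simp [this]
  | succ n ih =>
      have hpow : (B ^ (n+1)) x = (B ^ n) (B x) := by
        rw [pow_succ, ContinuousLinearMap.mul_apply]
      rw [hpow, ih (B x) j, hB x (j + n)]
      have hins : Finset.Icc j (j + (n+1:ℕ) - 1) = insert (j + n) (Finset.Icc j (j + (n:ℕ) - 1)) := by
        ext t
        simp only [Finset.mem_Icc, Finset.mem_insert]
        omega
      rw [hins, Finset.prod_insert (by simp only [Finset.mem_Icc]; omega)]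
      push_cast
      ring_nf

include hι hE hB in
lemma aux_pow_E (n : ℕ) (m : ℤ) :
    (B ^ n) (E m) = (∏ t ∈ Finset.Icc (m - n) (m - 1), w t) • E (m - n) := by
  apply hι
  funext j
  rw [aux_iota_pow ι w B hB n (E m) j, hE, _root_.map_smul, hE]
  by_cases hj : j = m - n
  · subst hj
    have h1 : (Pi.single m (1:𝕂) : ℤ → 𝕂) (m - n + n) = 1 := by
      rw [show m - (n:ℤ) + n = m by ring, Pi.single_eq_same]
    have h2 : ((∏ t ∈ Finset.Icc (m - (n:ℤ)) (m - 1), w t) • (Pi.single (m - (n:ℤ)) (1:𝕂) : ℤ → 𝕂)) (m - n) = ∏ t ∈ Finset.Icc (m - (n:ℤ)) (m - 1), w t := by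
      simp
    rw [h1, h2]
    rw [show m - (n:ℤ) + (n:ℤ) - 1 = m - 1 by ring]
    ring
  · have h1 : (Pi.single m (1:𝕂) : ℤ → 𝕂) (j + n) = 0 :=
      Pi.single_eq_of_ne (by omega) 1
    have h2 : ((∏ t ∈ Finset.Icc (m - (n:ℤ)) (m - 1), w t) • (Pi.single (m - (n:ℤ)) (1:𝕂) : ℤ → 𝕂)) j = 0 := by
      simp [Pi.single_eq_of_ne hj]
    rw [h1, h2, mul_zero]

include hι hE hB in
lemma aux_B_E (m : ℤ) : B (E m) = w (m - 1) • E (m - 1) := by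
  have := aux_pow_E ι E w B hι hE hB 1 m
  simpa using this

include hι hE hB in
lemma aux_iota_TN [IsTopologicalAddGroup X] (N : ℕ) (x : X) :
    (B.comp (auxSN ι E N) - (auxSN ι E N).comp (B.comp (auxSN ι E N))) x
      = (w (-(N:ℤ) - 1) * ι x (-(N:ℤ))) • E (-(N:ℤ) - 1) := by
  apply hι
  funext j
  rw [_root_.map_smul, hE]
  simp only [ContinuousLinearMap.sub_apply, ContinuousLinearMap.comp_apply, map_sub]
  rw [Pi.sub_apply]
  rw [hB, aux_iota_SN ι E hE, aux_iota_SN ι E hE, hB, aux_iota_SN ι E hE]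
  simp only [Finset.mem_Icc, Pi.smul_apply, Pi.single_apply, smul_eq_mul]
  by_cases hj : j = -(N:ℤ) - 1
  · subst hj
    have h1 : ¬ (-(N:ℤ) ≤ -(N:ℤ) - 1 ∧ -(N:ℤ) - 1 ≤ (N:ℤ)) := by omega
    have h2 : (-(N:ℤ) ≤ -(N:ℤ) - 1 + 1 ∧ -(N:ℤ) - 1 + 1 ≤ (N:ℤ)) := by
      constructor <;> omega
    simp only [if_pos h2, if_neg h1]
    rw [show -(N:ℤ) - 1 + 1 = -(N:ℤ) by ring]
    simp
  · have h3 : ¬ j = -(N:ℤ) - 1 := hj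
    rw [if_neg h3]
    by_cases hin : -(N:ℤ) ≤ j ∧ j ≤ (N:ℤ)
    · rw [if_pos hin]; ring
    · rw [if_neg hin]
      by_cases hin2 : -(N:ℤ) ≤ j + 1 ∧ j + 1 ≤ (N:ℤ)
      · exfalso; omega
      · rw [if_neg hin2]; ring

end SeqSpace2

section Equicont

variable {𝕂 X : Type} [RCLike 𝕂] [AddCommGroup X] [Module 𝕂 X]
    [MetricSpace X] [CompleteSpace X] [ContinuousAdd X] [ContinuousSMul 𝕂 X]
    [Module ℝ X] [IsScalarTower ℝ 𝕂 X] [LocallyConvexSpace ℝ X]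
variable (hinv : ∀ x y z : X, dist (x + z) (y + z) = dist x y)
variable (ι : X →L[𝕂] (ℤ → 𝕂)) (E : ℤ → X)
variable (B : X →L[𝕂] X)
variable (hbasis : ∀ x : X,
      Tendsto (fun N : ℕ => ∑ m ∈ Finset.Icc (-(N : ℤ)) (N : ℤ), ι x m • E m)
        atTop (nhds x))

include hinv in
lemma aux_topAddGroup : IsTopologicalAddGroup X := by
  refine { continuous_neg := ?_ }
  have hiso : Isometry (fun a : X => -a) := by
    apply Isometry.of_dist_eq
    intro a b
    have h := hinv (-a) (-b) (a + b)
    have h1 : -a + (a + b) = b := by abel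
    have h2 : -b + (a + b) = a := by abel
    rw [h1, h2] at h
    rw [← h, dist_comm]
  exact hiso.continuous

include hinv in
lemma aux_uniformAddGroup : IsUniformAddGroup X := by
  constructor
  rw [Metric.uniformContinuous_iff]
  intro ε hε
  refine ⟨ε / 2, by linarith, ?_⟩
  rintro ⟨a1, a2⟩ ⟨b1, b2⟩ hab
  rw [Prod.dist_eq] at hab
  simp only at *
  have key : dist (a1 - a2) (b1 - b2) ≤ dist a1 b1 + dist a2 b2 := by
    rw [aux_dist_sub hinv (a1 - a2) (b1 - b2)]
    have : a1 - a2 - (b1 - b2) = (a1 - b1) - (a2 - b2) := by abel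
    rw [this]
    calc dist ((a1 - b1) - (a2 - b2)) 0
        ≤ dist (a1 - b1) 0 + dist (a2 - b2) 0 := aux_dist_sub_le hinv _ _
      _ = dist a1 b1 + dist a2 b2 := by
          rw [← aux_dist_sub hinv a1 b1, ← aux_dist_sub hinv a2 b2]
  have h1 : dist a1 b1 < ε / 2 := lt_of_le_of_lt (le_max_left _ _) hab
  have h2 : dist a2 b2 < ε / 2 := lt_of_le_of_lt (le_max_right _ _) hab
  calc dist (a1 - a2) (b1 - b2) ≤ dist a1 b1 + dist a2 b2 := key
    _ < ε / 2 + ε / 2 := by linarith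
    _ = ε := by ring

end Equicont

lemma aux_contSMulReal (𝕂 X : Type) [RCLike 𝕂] [AddCommGroup X] [Module 𝕂 X]
    [TopologicalSpace X] [ContinuousSMul 𝕂 X] [Module ℝ X] [IsScalarTower ℝ 𝕂 X] :
    ContinuousSMul ℝ X := by
  constructor
  have heq : (fun p : ℝ × X => p.1 • p.2) = fun p : ℝ × X => (algebraMap ℝ 𝕂 p.1) • p.2 := by
    funext p
    rw [algebraMap_smul]
  rw [heq]
  exact (((continuous_algebraMap ℝ 𝕂).comp continuous_fst).smul continuous_snd)

section Equicont2

open scoped ComplexOrder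

variable {𝕂 X : Type} [RCLike 𝕂] [AddCommGroup X] [Module 𝕂 X]
    [MetricSpace X] [CompleteSpace X] [ContinuousAdd X] [ContinuousSMul 𝕂 X]
    [Module ℝ X] [IsScalarTower ℝ 𝕂 X] [LocallyConvexSpace ℝ X]
variable (ι : X →L[𝕂] (ℤ → 𝕂)) (E : ℤ → X)
variable (B : X →L[𝕂] X)
variable (hbasis : ∀ x : X,
      Tendsto (fun N : ℕ => ∑ m ∈ Finset.Icc (-(N : ℤ)) (N : ℤ), ι x m • E m)
        atTop (nhds x))

include hbasis in
lemma aux_UE_T [IsTopologicalAddGroup X] [IsUniformAddGroup X] :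
    UniformEquicontinuous (fun N : ℕ => ⇑(B.comp (auxSN ι E N)
      - (auxSN ι E N).comp (B.comp (auxSN ι E N)))) := by
  haveI := aux_contSMulReal 𝕂 X
  haveI : LocallyConvexSpace 𝕂 X :=
    (locallyConvexSpace_iff_exists_convex_subset_zero 𝕂 X).mpr fun U hU => by
      obtain ⟨S, hS, hSc, hSU⟩ :=
        (locallyConvexSpace_iff_exists_convex_subset_zero ℝ X).mp inferInstance U hU
      exact ⟨S, hS, convex_RCLike_iff_convex_real.mpr hSc, hSU⟩
  have hq : WithSeminorms (gaugeSeminormFamily 𝕂 X) := with_gaugeSeminormFamily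
  have hbasis' : ∀ x : X, Tendsto (fun N : ℕ => auxSN ι E N x) atTop (nhds x) := by
    intro x
    have := hbasis x
    simpa [auxSN_apply] using this
  -- equicontinuity of the partial sum projections
  have H1 : ∀ (k : AbsConvexOpenSets 𝕂 X) (x : X),
      BddAbove (Set.range fun N : ℕ => gaugeSeminormFamily 𝕂 X k ((auxSN ι E N) x)) := by
    intro k x
    exact (((hq.continuous_seminorm k).tendsto x).comp (hbasis' x)).bddAbove_range
  have UES : UniformEquicontinuous (fun N : ℕ => ⇑(auxSN ι E N)) := by
    have := hq.banach_steinhaus H1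
    exact this
  -- pointwise convergence to zero of the commutator family
  have H2 : ∀ x : X, Tendsto (fun N : ℕ =>
      (B.comp (auxSN ι E N) - (auxSN ι E N).comp (B.comp (auxSN ι E N))) x) atTop (nhds 0) := by
    intro x
    have h1 : Tendsto (fun N : ℕ => B ((auxSN ι E N) x)) atTop (nhds (B x)) :=
      (B.continuous.tendsto x).comp (hbasis' x)
    have h2 : Tendsto (fun N : ℕ => (auxSN ι E N) (B ((auxSN ι E N) x))) atTop (nhds (B x)) := by
      rw [Metric.tendsto_atTop]
      intro ε hε
      obtain ⟨δ, hδ, hδ'⟩ := (Metric.uniformEquicontinuous_iff.mp UES) (ε/2) (by linarith)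
      have h3 : Tendsto (fun N : ℕ => (auxSN ι E N) (B x)) atTop (nhds (B x)) := hbasis' (B x)
      rw [Metric.tendsto_atTop] at h1 h3
      obtain ⟨N1, hN1⟩ := h1 δ hδ
      obtain ⟨N2, hN2⟩ := h3 (ε/2) (by linarith)
      refine ⟨max N1 N2, fun N hN => ?_⟩
      have hb1 := hN1 N (le_trans (le_max_left _ _) hN)
      have hb2 := hN2 N (le_trans (le_max_right _ _) hN)
      calc dist ((auxSN ι E N) (B ((auxSN ι E N) x))) (B x)
          ≤ dist ((auxSN ι E N) (B ((auxSN ι E N) x))) ((auxSN ι E N) (B x))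
            + dist ((auxSN ι E N) (B x)) (B x) := dist_triangle _ _ _
        _ < ε/2 + ε/2 := add_lt_add (hδ' _ _ hb1 N) hb2
        _ = ε := by ring
    have := h1.sub h2
    simpa using this
  have H2' : ∀ (k : AbsConvexOpenSets 𝕂 X) (x : X),
      BddAbove (Set.range fun N : ℕ => gaugeSeminormFamily 𝕂 X k
        ((B.comp (auxSN ι E N) - (auxSN ι E N).comp (B.comp (auxSN ι E N))) x)) := by
    intro k x
    exact (((hq.continuous_seminorm k).tendsto 0).comp (H2 x)).bddAbove_range
  have := hq.banach_steinhaus H2'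
  exact this

end Equicont2

section Main

variable {𝕂 X : Type} [RCLike 𝕂] [AddCommGroup X] [Module 𝕂 X]
    [MetricSpace X] [CompleteSpace X] [ContinuousAdd X] [ContinuousSMul 𝕂 X]
    [Module ℝ X] [IsScalarTower ℝ 𝕂 X] [LocallyConvexSpace ℝ X]
variable (hinv : ∀ x y z : X, dist (x + z) (y + z) = dist x y)
variable (ι : X →L[𝕂] (ℤ → 𝕂)) (hι : Function.Injective ι)
variable (E : ℤ → X) (hE : ∀ n, ι (E n) = Pi.single n 1)
variable (hbasis : ∀ x : X,
      Tendsto (fun N : ℕ => ∑ m ∈ Finset.Icc (-(N : ℤ)) (N : ℤ), ι x m • E m)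
        atTop (nhds x))
variable (w : ℤ → 𝕂) (hw0 : ∀ n, w n ≠ 0)
variable (B : X →L[𝕂] X) (hB : ∀ (x : X) (n : ℤ), ι (B x) n = w n * ι x (n + 1))

include hw0 in
lemma aux_prod_split (k : ℤ) :
    ∃ c : 𝕂, c ≠ 0 ∧ ∀ j : ℤ, j ≤ -1 → j ≤ k - 1 →
      (∏ t ∈ Finset.Icc j (k-1), w t) = (∏ t ∈ Finset.Icc j (-1), w t) * c := by
  rcases le_or_gt 0 k with hk | hk
  · refine ⟨∏ t ∈ Finset.Icc 0 (k-1), w t,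
      Finset.prod_ne_zero_iff.mpr (fun t _ => hw0 t), fun j hj1 hjk => ?_⟩
    rw [← Finset.prod_union (by
      rw [Finset.disjoint_left]
      intro t ht1 ht2
      simp only [Finset.mem_Icc] at ht1 ht2
      omega)]
    congr 1
    ext t
    simp only [Finset.mem_union, Finset.mem_Icc]
    omega
  · refine ⟨(∏ t ∈ Finset.Icc k (-1), w t)⁻¹,
      inv_ne_zero (Finset.prod_ne_zero_iff.mpr (fun t _ => hw0 t)), fun j hj1 hjk => ?_⟩
    have hsplit : (∏ t ∈ Finset.Icc j (-1), w t)
        = (∏ t ∈ Finset.Icc j (k-1), w t) * (∏ t ∈ Finset.Icc k (-1), w t) := by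
      rw [← Finset.prod_union (by
        rw [Finset.disjoint_left]
        intro t ht1 ht2
        simp only [Finset.mem_Icc] at ht1 ht2
        omega)]
      congr 1
      ext t
      simp only [Finset.mem_union, Finset.mem_Icc]
      omega
    rw [hsplit]
    have hne : (∏ t ∈ Finset.Icc k (-1), w t) ≠ 0 :=
      Finset.prod_ne_zero_iff.mpr (fun t _ => hw0 t)
    field_simp

include hinv hι hE hbasis hw0 hB in
lemma aux_forward (hLY : LiYorkeChaotic (⇑B)) :
    ((∃ n : ℕ → ℕ, StrictMono n ∧
        Tendsto (fun i : ℕ =>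
            (∏ t ∈ Finset.Icc (-(n i : ℤ)) (-1), w t) • E (-(n i : ℤ)))
          atTop (nhds 0)) ∧
      ∃ x : X, ¬ Tendsto (fun n : ℕ => (⇑B)^[n] x) atTop (nhds 0)) := by
  haveI := aux_topAddGroup (X := X) hinv
  haveI := aux_uniformAddGroup (X := X) hinv
  have hpow : ∀ (n : ℕ) (v : X), (⇑B)^[n] v = (B ^ n) v := by
    intro n v
    rw [FunLike.coe_pow_eq_iterate]
  obtain ⟨S, hSc, hSp⟩ := hLY
  have hinf : S.Infinite := fun hfin => hSc hfin.countable
  obtain ⟨x, hx, y, hy, hxy⟩ := hinf.nontrivial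
  have hp := hSp hx hy hxy
  set z := x - y with hzdef
  have key : ∀ n : ℕ, edist ((⇑B)^[n] x) ((⇑B)^[n] y) = edist ((⇑B)^[n] z) 0 := by
    intro n
    rw [aux_edist_sub hinv]
    congr 1
    rw [hpow, hpow, hpow, ← map_sub]
  have h1 : liminf (fun n => edist ((⇑B)^[n] z) 0) atTop = 0 := by
    have := hp.1
    simpa only [key] using this
  have h2 : 0 < limsup (fun n => edist ((⇑B)^[n] z) 0) atTop := by
    have := hp.2
    simpa only [key] using this
  refine ⟨?_, ⟨z, (aux_not_tendsto_iff_limsup (x0 := 0)).mpr h2⟩⟩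
  -- condition (a)
  have hz0 : z ≠ 0 := by
    intro h
    rw [h] at h2
    have hzero : ∀ n : ℕ, (⇑B)^[n] (0 : X) = 0 := by
      intro n; rw [hpow, map_zero]
    simp only [hzero, edist_self] at h2
    rw [limsup_const (0 : ENNReal)] at h2
    exact lt_irrefl _ h2
  obtain ⟨k, hk⟩ : ∃ k : ℤ, ι z k ≠ 0 := by
    by_contra hc
    push_neg at hc
    apply hz0
    apply hι
    rw [map_zero]
    funext j
    exact hc j
  obtain ⟨φ, hφm, hφt⟩ := aux_subseq_of_liminf_zero h1
  have UE := aux_UE_T ι E B hbasis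
  obtain ⟨c, hc0, hcsplit⟩ := aux_prod_split w hw0 k
  set i₀ : ℕ := k.toNat + 1 with hi₀def
  set M : ℕ → ℕ := fun i => φ (i + i₀) with hMdef
  have hMk : ∀ i, k + 1 ≤ (M i : ℤ) := by
    intro i
    have h1' : i + i₀ ≤ φ (i + i₀) := hφm.le_apply
    have h2' : k ≤ (k.toNat : ℤ) := Int.self_le_toNat k
    have : i₀ ≤ M i := le_trans (Nat.le_add_left _ _) h1'
    have := (Nat.cast_le (α := ℤ)).mpr this
    push_cast at this ⊢
    omega
  set N : ℕ → ℕ := fun i => ((M i : ℤ) - k).toNat with hNdef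
  have hN : ∀ i, (N i : ℤ) = (M i : ℤ) - k := by
    intro i
    simp only [hNdef]
    rw [Int.toNat_of_nonneg]
    have := hMk i
    omega
  have hy0 : Tendsto (fun i => (⇑B)^[M i] z) atTop (nhds 0) :=
    hφt.comp (tendsto_add_atTop_nat i₀)
  -- apply equicontinuity
  have happ : Tendsto (fun i => (B.comp (auxSN ι E (N i))
      - (auxSN ι E (N i)).comp (B.comp (auxSN ι E (N i)))) ((⇑B)^[M i] z))
      atTop (nhds 0) := by
    rw [Metric.tendsto_atTop]
    intro ε hε
    obtain ⟨δ, hδ, hδ'⟩ := (Metric.uniformEquicontinuous_iff.mp UE) ε hε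
    rw [Metric.tendsto_atTop] at hy0
    obtain ⟨I, hI⟩ := hy0 δ hδ
    refine ⟨I, fun i hi => ?_⟩
    have := hδ' ((⇑B)^[M i] z) 0 (hI i hi) (N i)
    simpa using this
  -- compute the value
  have hTval : ∀ i, (B.comp (auxSN ι E (N i))
      - (auxSN ι E (N i)).comp (B.comp (auxSN ι E (N i)))) ((⇑B)^[M i] z)
      = (ι z k * c) • ((∏ t ∈ Finset.Icc (-(N i : ℤ) - 1) (-1), w t) • E (-(N i : ℤ) - 1)) := by
    intro i
    rw [aux_iota_TN ι E w B hι hE hB]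
    rw [hpow, aux_iota_pow ι w B hB]
    have he1 : -(N i : ℤ) + (M i : ℕ) = k := by
      have := hN i; omega
    have he2 : w (-(N i : ℤ) - 1) * ((∏ t ∈ Finset.Icc (-(N i : ℤ)) (-(N i : ℤ) + (M i : ℕ) - 1), w t) * ι z (-(N i : ℤ) + (M i : ℕ)))
        = (∏ t ∈ Finset.Icc (-(N i : ℤ) - 1) (k - 1), w t) * ι z k := by
      rw [he1]
      have hins : Finset.Icc (-(N i : ℤ) - 1) (k - 1)
          = insert (-(N i : ℤ) - 1) (Finset.Icc (-(N i : ℤ)) (k - 1)) := by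
        ext t
        simp only [Finset.mem_Icc, Finset.mem_insert]
        have := hN i; have := hMk i
        omega
      rw [hins, Finset.prod_insert (by
        simp only [Finset.mem_Icc]
        omega)]
      ring
    rw [he2]
    rw [hcsplit (-(N i : ℤ) - 1) (by have := hN i; have := hMk i; omega)
      (by have := hN i; have := hMk i; omega)]
    rw [smul_smul]
    ring_nf
  rw [funext hTval] at happ
  have hfinal : Tendsto (fun i => (∏ t ∈ Finset.Icc (-(N i : ℤ) - 1) (-1), w t) • E (-(N i : ℤ) - 1))
      atTop (nhds 0) := by
    have hne : ι z k * c ≠ 0 := mul_ne_zero hk hc0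
    have := happ.const_smul ((ι z k * c)⁻¹)
    simp only [inv_smul_smul₀ hne, smul_zero] at this
    exact this
  refine ⟨fun i => N i + 1, ?_, ?_⟩
  · intro i j hij
    have h1' : (M i : ℤ) < (M j : ℤ) := by
      exact_mod_cast hφm (by omega : i + i₀ < j + i₀)
    have h2' := hN i
    have h3' := hN j
    show N i + 1 < N j + 1
    omega
  · have hcast : ∀ i : ℕ, (-((N i + 1 : ℕ) : ℤ)) = -(N i : ℤ) - 1 := by
      intro i; push_cast; ring
    simp only [hcast]
    exact hfinal

end Main

section Backward

variable {𝕂 X : Type} [RCLike 𝕂] [AddCommGroup X] [Module 𝕂 X]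
    [MetricSpace X] [CompleteSpace X] [ContinuousAdd X] [ContinuousSMul 𝕂 X]
    [Module ℝ X] [IsScalarTower ℝ 𝕂 X] [LocallyConvexSpace ℝ X]
variable (hinv : ∀ x y z : X, dist (x + z) (y + z) = dist x y)
variable (ι : X →L[𝕂] (ℤ → 𝕂)) (hι : Function.Injective ι)
variable (E : ℤ → X) (hE : ∀ n, ι (E n) = Pi.single n 1)
variable (hbasis : ∀ x : X,
      Tendsto (fun N : ℕ => ∑ m ∈ Finset.Icc (-(N : ℤ)) (N : ℤ), ι x m • E m)
        atTop (nhds x))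
variable (w : ℤ → 𝕂) (hw0 : ∀ n, w n ≠ 0)
variable (B : X →L[𝕂] X) (hB : ∀ (x : X) (n : ℤ), ι (B x) n = w n * ι x (n + 1))

/-- an orbit converging to zero -/
def auxVan (B : X →L[𝕂] X) (v : X) : Prop :=
  Tendsto (fun n : ℕ => (⇑B)^[n] v) atTop (nhds 0)

lemma aux_hpow (n : ℕ) (v : X) : (⇑B)^[n] v = (B ^ n) v := by
  rw [FunLike.coe_pow_eq_iterate]

lemma auxVan_zero : auxVan B (0 : X) := by
  have : ∀ n : ℕ, (⇑B)^[n] (0 : X) = 0 := fun n => by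
    rw [aux_hpow, map_zero]
  unfold auxVan
  simp only [this]
  exact tendsto_const_nhds

lemma auxVan_add (a b : X) (ha : auxVan B a) (hb : auxVan B b) :
    auxVan B (a + b) := by
  unfold auxVan at *
  have : ∀ n : ℕ, (⇑B)^[n] (a + b) = (⇑B)^[n] a + (⇑B)^[n] b := fun n => by
    rw [aux_hpow, aux_hpow, aux_hpow, map_add]
  simp only [this]
  simpa using ha.add hb

lemma auxVan_sub [IsTopologicalAddGroup X] (a b : X) (ha : auxVan B a) (hb : auxVan B b) :
    auxVan B (a - b) := by
  unfold auxVan at *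
  have : ∀ n : ℕ, (⇑B)^[n] (a - b) = (⇑B)^[n] a - (⇑B)^[n] b := fun n => by
    rw [aux_hpow, aux_hpow, aux_hpow, map_sub]
  simp only [this]
  simpa using ha.sub hb

lemma auxVan_smul (c : 𝕂) (a : X) (ha : auxVan B a) : auxVan B (c • a) := by
  unfold auxVan at *
  have : ∀ n : ℕ, (⇑B)^[n] (c • a) = c • (⇑B)^[n] a := fun n => by
    rw [aux_hpow, aux_hpow, _root_.map_smul]
  simp only [this]
  simpa using ha.const_smul c

include hι hE hw0 hB in
lemma auxVan_E (hE0 : auxVan B (E 0)) : ∀ m : ℤ, auxVan B (E m) := by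
  have hup : ∀ m : ℤ, auxVan B (E m) → auxVan B (E (m + 1)) := by
    intro m hm
    have hBE : B (E (m + 1)) = w m • E m := by
      have := aux_B_E ι E w B hι hE hB (m + 1)
      simpa using this
    unfold auxVan at *
    rw [← tendsto_add_atTop_iff_nat 1]
    have : ∀ n : ℕ, (⇑B)^[n + 1] (E (m + 1)) = w m • (⇑B)^[n] (E m) := by
      intro n
      rw [Function.iterate_succ_apply, hBE, aux_hpow, aux_hpow, _root_.map_smul]
    simp only [this]
    simpa using hm.const_smul (w m)
  have hdown : ∀ m : ℤ, auxVan B (E m) → auxVan B (E (m - 1)) := by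
    intro m hm
    have hBE : B (E m) = w (m - 1) • E (m - 1) := aux_B_E ι E w B hι hE hB m
    have hEm : E (m - 1) = (w (m - 1))⁻¹ • B (E m) := by
      rw [hBE, inv_smul_smul₀ (hw0 (m - 1))]
    unfold auxVan at *
    have : ∀ n : ℕ, (⇑B)^[n] (E (m - 1)) = (w (m - 1))⁻¹ • (⇑B)^[n + 1] (E m) := by
      intro n
      rw [hEm, Function.iterate_succ_apply, aux_hpow, aux_hpow, _root_.map_smul]
    simp only [this]
    have h2 : Tendsto (fun n : ℕ => (⇑B)^[n + 1] (E m)) atTop (nhds 0) :=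
      (tendsto_add_atTop_iff_nat 1).mpr hm
    simpa using h2.const_smul ((w (m - 1))⁻¹)
  intro m
  induction m using Int.induction_on with
  | zero => exact hE0
  | succ i ih => exact hup i ih
  | pred i ih =>
      have := hdown (-(i : ℤ)) ih
      simpa [sub_eq_add_neg] using this

include hι hE hw0 hB in
lemma auxVan_SN (hE0 : auxVan B (E 0)) (x : X) (N : ℕ) :
    auxVan B (auxSN ι E N x) := by
  have hvE := auxVan_E ι hι E hE w hw0 B hB hE0
  unfold auxVan at *
  have : ∀ n : ℕ, (⇑B)^[n] (auxSN ι E N x)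
      = ∑ m ∈ Finset.Icc (-(N : ℤ)) (N : ℤ), ι x m • (⇑B)^[n] (E m) := by
    intro n
    rw [aux_hpow, auxSN_apply, map_sum]
    refine Finset.sum_congr rfl fun m _ => ?_
    rw [_root_.map_smul, aux_hpow]
  simp only [this]
  have htend : Tendsto (fun n : ℕ => ∑ m ∈ Finset.Icc (-(N : ℤ)) (N : ℤ),
      ι x m • (⇑B)^[n] (E m)) atTop
      (nhds (∑ m ∈ Finset.Icc (-(N : ℤ)) (N : ℤ), (0 : X))) := by
    refine tendsto_finset_sum _ fun m _ => ?_
    have := (hvE m).const_smul (ι x m)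
    simpa using this
  simpa using htend

include hinv hι hE hbasis hw0 hB in
lemma aux_key [IsTopologicalAddGroup X] (hE0 : auxVan B (E 0)) (x₀ : X) (ε : ℝ) (hε : 0 < ε)
    (hfreq : ∃ᶠ n in atTop, ε ≤ dist ((⇑B)^[n] x₀) 0) (A S₀ : ℕ) :
    ∃ a b s : ℕ, A ≤ a ∧ A ≤ b ∧ S₀ ≤ s ∧
      ε/4 ≤ dist ((⇑B)^[s] (auxSN ι E b x₀ - auxSN ι E a x₀)) 0 := by
  by_contra hc
  push_neg at hc
  -- hc : ∀ a b s, A ≤ a → A ≤ b → S₀ ≤ s → dist ... < ε/4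
  have hvA := auxVan_SN ι hι E hE w hw0 B hB hE0 x₀ A
  unfold auxVan at hvA
  rw [Metric.tendsto_atTop] at hvA
  obtain ⟨N₁, hN₁⟩ := hvA (ε/4) (by linarith)
  obtain ⟨m, hm, hmdist⟩ := frequently_atTop.mp hfreq (max S₀ N₁)
  -- decompose
  have hdec : (⇑B)^[m] x₀ = (⇑B)^[m] (auxSN ι E A x₀) + (⇑B)^[m] (x₀ - auxSN ι E A x₀) := by
    rw [aux_hpow, aux_hpow, aux_hpow, ← map_add]
    congr 1
    abel
  have hb1 : dist ((⇑B)^[m] (auxSN ι E A x₀)) 0 < ε/4 :=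
    by simpa using hN₁ m (le_trans (le_max_right _ _) hm)
  have hb2 : dist ((⇑B)^[m] (x₀ - auxSN ι E A x₀)) 0 ≤ ε/4 := by
    have hbas : Tendsto (fun b : ℕ => auxSN ι E b x₀ - auxSN ι E A x₀) atTop
        (nhds (x₀ - auxSN ι E A x₀)) := by
      have h1 : Tendsto (fun b : ℕ => auxSN ι E b x₀) atTop (nhds x₀) := by
        have := hbasis x₀
        simpa [auxSN_apply] using this
      exact h1.sub_const _
    have hcont : Tendsto (fun b : ℕ => (⇑B)^[m] (auxSN ι E b x₀ - auxSN ι E A x₀)) atTop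
        (nhds ((⇑B)^[m] (x₀ - auxSN ι E A x₀))) := by
      have hBc : Continuous ((⇑B)^[m]) := by
        have : (⇑B)^[m] = ⇑(B ^ m) := funext fun v => aux_hpow B m v
        rw [this]
        exact (B ^ m).continuous
      exact (hBc.tendsto _).comp hbas
    have hlim : Tendsto (fun b : ℕ => dist ((⇑B)^[m] (auxSN ι E b x₀ - auxSN ι E A x₀)) 0)
        atTop (nhds (dist ((⇑B)^[m] (x₀ - auxSN ι E A x₀)) 0)) :=
      hcont.dist tendsto_const_nhds
    refine le_of_tendsto hlim ?_
    filter_upwards [eventually_ge_atTop A] with b hbA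
    exact (hc A b m le_rfl hbA (le_trans (le_max_left _ _) hm)).le
  have htri : dist ((⇑B)^[m] x₀) 0
      ≤ dist ((⇑B)^[m] (auxSN ι E A x₀)) 0 + dist ((⇑B)^[m] (x₀ - auxSN ι E A x₀)) 0 := by
    rw [hdec]
    exact aux_dist_add_le hinv _ _
  linarith

include hinv hι hE hbasis hw0 hB in
lemma aux_step [IsTopologicalAddGroup X] (hE0 : auxVan B (E 0)) (x₀ : X) (ε : ℝ) (hε : 0 < ε)
    (hfreq : ∃ᶠ n in atTop, ε ≤ dist ((⇑B)^[n] x₀) 0)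
    (p : X) (hp : auxVan B p) (T : Finset ℕ) (k : ℕ) (η : ℝ) (hη : 0 < η) :
    ∃ u : X, ∃ s : ℕ, auxVan B u ∧ dist u 0 ≤ η ∧
      (∀ j ∈ T, dist ((⇑B)^[j] u) 0 ≤ η) ∧ k ≤ s ∧
      ε/8 ≤ dist ((⇑B)^[s] (p + u)) 0 := by
  -- S₀ : controls the orbit of p
  have hp' := hp
  unfold auxVan at hp'
  rw [Metric.tendsto_atTop] at hp'
  obtain ⟨S₁, hS₁⟩ := hp' (ε/8) (by linarith)
  -- moduli of continuity for the finitely many times in T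
  have hδ : ∃ ρ : ℝ, 0 < ρ ∧ ρ ≤ η ∧ ∀ j ∈ T, ∀ v : X, dist v 0 < ρ →
      dist ((⇑B)^[j] v) 0 ≤ η := by
    classical
    induction T using Finset.induction_on with
    | empty => exact ⟨η, hη, le_rfl, by simp⟩
    | insert j T' hnotmem ih =>
        obtain ⟨ρ, hρ, hρη, hρT⟩ := ih
        have hBc : Continuous ((⇑B)^[j]) := by
          have : (⇑B)^[j] = ⇑(B ^ j) := funext fun v => aux_hpow B j v
          rw [this]
          exact (B ^ j).continuous
        have hzero : (⇑B)^[j] (0 : X) = 0 := by rw [aux_hpow, map_zero]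
        have hct := Metric.continuous_iff.mp hBc 0 η hη
        obtain ⟨δ, hδpos, hδ'⟩ := hct
        refine ⟨min ρ δ, lt_min hρ hδpos, le_trans (min_le_left _ _) hρη, ?_⟩
        intro j' hj' v hv
        rcases Finset.mem_insert.mp hj' with rfl | hmem
        · have := hδ' v (lt_of_lt_of_le hv (min_le_right _ _))
          rw [hzero] at this
          exact this.le
        · exact hρT j' hmem v (lt_of_lt_of_le hv (min_le_left _ _))
  obtain ⟨ρ, hρ, hρη, hρT⟩ := hδ
  -- Cauchy-type smallness of far blocks
  have h1 : Tendsto (fun b : ℕ => auxSN ι E b x₀) atTop (nhds x₀) := by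
    have := hbasis x₀
    simpa [auxSN_apply] using this
  rw [Metric.tendsto_atTop] at h1
  obtain ⟨A, hA⟩ := h1 (ρ/2) (by linarith)
  obtain ⟨a, b, s, ha, hb, hs, hblock⟩ :=
    aux_key hinv ι hι E hE hbasis w hw0 B hB hE0 x₀ ε hε hfreq A (max k S₁)
  set u : X := auxSN ι E b x₀ - auxSN ι E a x₀ with hudef
  have hularge := hblock
  have husmall : dist u 0 < ρ := by
    rw [hudef, ← aux_dist_sub hinv]
    calc dist (auxSN ι E b x₀) (auxSN ι E a x₀)
        ≤ dist (auxSN ι E b x₀) x₀ + dist x₀ (auxSN ι E a x₀) := dist_triangle _ _ _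
      _ < ρ/2 + ρ/2 := by
          have h2 := hA b hb
          have h3 := hA a ha
          rw [dist_comm x₀ (auxSN ι E a x₀)]
          linarith
      _ = ρ := by ring
  refine ⟨u, s, ?_, husmall.le.trans hρη, fun j hj => hρT j hj u husmall, le_trans (le_max_left _ _) hs, ?_⟩
  · exact auxVan_sub B _ _ (auxVan_SN ι hι E hE w hw0 B hB hE0 x₀ b)
      (auxVan_SN ι hι E hE w hw0 B hB hE0 x₀ a)
  · -- reverse triangle
    have hsplit : (⇑B)^[s] u = (⇑B)^[s] (p + u) - (⇑B)^[s] p := by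
      rw [aux_hpow, aux_hpow, aux_hpow, ← map_sub]
      congr 1
      abel
    have htri : dist ((⇑B)^[s] u) 0 ≤ dist ((⇑B)^[s] (p + u)) 0 + dist ((⇑B)^[s] p) 0 := by
      rw [hsplit]
      exact aux_dist_sub_le hinv _ _
    have hporbit : dist ((⇑B)^[s] p) 0 < ε/8 := hS₁ s (le_trans (le_max_right _ _) hs)
    linarith

include hinv hι hE hbasis hw0 hB in
lemma aux_construct [IsTopologicalAddGroup X] (hE0 : auxVan B (E 0)) (x₀ : X)
    (hx₀ : ¬ Tendsto (fun n : ℕ => (⇑B)^[n] x₀) atTop (nhds 0)) :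
    ∃ z : X, liminf (fun n => edist ((⇑B)^[n] z) 0) atTop = 0 ∧
      ¬ Tendsto (fun n : ℕ => (⇑B)^[n] z) atTop (nhds 0) := by
  classical
  obtain ⟨ε, hε, hfreq⟩ := aux_not_tendsto_exists_eps hx₀
  have STEP := aux_step hinv ι hι E hE hbasis w hw0 B hB hE0 x₀ ε hε hfreq
  choose! uF sF hu1 hu2 hu3 hu4 hu5 using STEP
  have TEND : ∀ p : X, auxVan B p → ∀ k : ℕ, ∀ r : ℝ, 0 < r →
      ∃ t : ℕ, k ≤ t ∧ dist ((⇑B)^[t] p) 0 ≤ r := by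
    intro p hp k r hr
    unfold auxVan at hp
    rw [Metric.tendsto_atTop] at hp
    obtain ⟨N, hN⟩ := hp r hr
    exact ⟨max k N, le_max_left _ _, (by simpa using (hN (max k N) (le_max_right _ _)).le)⟩
  choose! tF ht1 ht2 using TEND
  -- the recursive construction
  let step : ℕ → X × Finset ℕ → X × Finset ℕ := fun k q =>
    (q.1 + uF q.1 q.2 (k+1) ((1/2 : ℝ)^(k+1)),
      insert (sF q.1 q.2 (k+1) ((1/2:ℝ)^(k+1)))
        (insert (tF (q.1 + uF q.1 q.2 (k+1) ((1/2:ℝ)^(k+1))) (k+1) ((1/2:ℝ)^(k+1))) q.2))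
  let seq : ℕ → X × Finset ℕ := fun n => Nat.rec ((0:X), (∅ : Finset ℕ)) step n
  let p : ℕ → X := fun k => (seq k).1
  let T : ℕ → Finset ℕ := fun k => (seq k).2
  let u : ℕ → X := fun k => uF (p (k-1)) (T (k-1)) k ((1/2:ℝ)^k)
  let s : ℕ → ℕ := fun k => sF (p (k-1)) (T (k-1)) k ((1/2:ℝ)^k)
  let t : ℕ → ℕ := fun k => tF (p k) k ((1/2:ℝ)^k)
  have hp1 : ∀ k : ℕ, p (k+1) = p k + u (k+1) := fun k => rfl
  have hT1 : ∀ k : ℕ, T (k+1) = insert (s (k+1)) (insert (t (k+1)) (T k)) := fun k => rfl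
  have hpos : ∀ k : ℕ, (0:ℝ) < (1/2:ℝ)^k := fun k => by positivity
  have hVan : ∀ k, auxVan B (p k) := by
    intro k
    induction k with
    | zero => exact auxVan_zero B
    | succ k ih =>
        rw [hp1 k]
        exact auxVan_add B _ _ ih (hu1 (p k) ih (T k) (k+1) _ (hpos _))
  have husmall : ∀ k : ℕ, dist (u (k+1)) 0 ≤ (1/2:ℝ)^(k+1) :=
    fun k => hu2 (p k) (hVan k) (T k) (k+1) _ (hpos _)
  have huT : ∀ k : ℕ, ∀ j ∈ T k, dist ((⇑B)^[j] (u (k+1))) 0 ≤ (1/2:ℝ)^(k+1) :=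
    fun k => hu3 (p k) (hVan k) (T k) (k+1) _ (hpos _)
  have hsge : ∀ k : ℕ, k+1 ≤ s (k+1) :=
    fun k => hu4 (p k) (hVan k) (T k) (k+1) _ (hpos _)
  have hsbig : ∀ k : ℕ, ε/8 ≤ dist ((⇑B)^[s (k+1)] (p (k+1))) 0 := by
    intro k
    rw [hp1 k]
    exact hu5 (p k) (hVan k) (T k) (k+1) _ (hpos _)
  have htge : ∀ k : ℕ, k+1 ≤ t (k+1) :=
    fun k => ht1 (p (k+1)) (hVan (k+1)) (k+1) _ (hpos _)
  have htsmall : ∀ k : ℕ, dist ((⇑B)^[t (k+1)] (p (k+1))) 0 ≤ (1/2:ℝ)^(k+1) :=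
    fun k => ht2 (p (k+1)) (hVan (k+1)) (k+1) _ (hpos _)
  have hmemT : ∀ k j : ℕ, 1 ≤ j → j ≤ k → s j ∈ T k ∧ t j ∈ T k := by
    intro k
    induction k with
    | zero => intro j h1 h2; omega
    | succ k ih =>
        intro j h1 h2
        rw [hT1 k]
        rcases Nat.lt_or_ge j (k+1) with h | h
        · obtain ⟨hs', ht'⟩ := ih j h1 (by omega)
          exact ⟨Finset.mem_insert_of_mem (Finset.mem_insert_of_mem hs'),
            Finset.mem_insert_of_mem (Finset.mem_insert_of_mem ht')⟩
        · have : j = k+1 := by omega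
          subst this
          exact ⟨Finset.mem_insert_self _ _,
            Finset.mem_insert_of_mem (Finset.mem_insert_self _ _)⟩
  have hdist : ∀ k m : ℕ, k ≤ m → dist (p m) (p k) ≤ (1/2:ℝ)^k - (1/2:ℝ)^m := by
    intro k m hkm
    induction m, hkm using Nat.le_induction with
    | base => simp
    | succ m hm ih =>
        have hstep : dist (p (m+1)) (p m) = dist (u (m+1)) 0 := by
          rw [hp1 m]
          have := hinv (u (m+1)) 0 (p m)
          simp only [zero_add] at this
          rw [← this, add_comm]
        have hps : (1/2:ℝ)^(m+1) = (1/2:ℝ)^m * (1/2) := pow_succ _ _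
        calc dist (p (m+1)) (p k) ≤ dist (p (m+1)) (p m) + dist (p m) (p k) :=
              dist_triangle _ _ _
          _ ≤ (1/2:ℝ)^(m+1) + ((1/2:ℝ)^k - (1/2:ℝ)^m) := by
              rw [hstep]; exact add_le_add (husmall m) ih
          _ ≤ (1/2:ℝ)^k - (1/2:ℝ)^(m+1) := by nlinarith [hpos m]
  have hcauchy : CauchySeq p := by
    rw [Metric.cauchySeq_iff']
    intro δ hδ
    obtain ⟨K, hK⟩ := exists_pow_lt_of_lt_one hδ (by norm_num : (1/2:ℝ) < 1)
    refine ⟨K, fun m hm => ?_⟩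
    have := hdist K m hm
    have := hpos m
    linarith
  obtain ⟨z, hz⟩ := cauchySeq_tendsto_of_complete hcauchy
  have htail : ∀ k τ : ℕ, (∀ j, k ≤ j → τ ∈ T j) →
      dist ((⇑B)^[τ] (z - p k)) 0 ≤ (1/2:ℝ)^k := by
    intro k τ hτ
    have hm : ∀ m, k ≤ m → dist ((⇑B)^[τ] (p m - p k)) 0 ≤ (1/2:ℝ)^k - (1/2:ℝ)^m := by
      intro m hkm
      induction m, hkm using Nat.le_induction with
      | base =>
          have : (⇑B)^[τ] (p k - p k) = 0 := by
            rw [sub_self, aux_hpow, map_zero]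
          simp [this]
      | succ m hm ih =>
          have hdecomp : p (m+1) - p k = (p m - p k) + u (m+1) := by
            rw [hp1 m]; abel
          have hlin : (⇑B)^[τ] ((p m - p k) + u (m+1))
              = (⇑B)^[τ] (p m - p k) + (⇑B)^[τ] (u (m+1)) := by
            rw [aux_hpow, aux_hpow, aux_hpow, map_add]
          rw [hdecomp, hlin]
          have hb := huT m τ (hτ m hm)
          have htr := aux_dist_add_le hinv ((⇑B)^[τ] (p m - p k)) ((⇑B)^[τ] (u (m+1)))
          have hps : (1/2:ℝ)^(m+1) = (1/2:ℝ)^m * (1/2) := pow_succ _ _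
          nlinarith [hpos m]
    have hcont : Tendsto (fun m => (⇑B)^[τ] (p m - p k)) atTop
        (nhds ((⇑B)^[τ] (z - p k))) := by
      have h1 : Tendsto (fun m => p m - p k) atTop (nhds (z - p k)) := hz.sub_const (p k)
      have hBc : Continuous ((⇑B)^[τ]) := by
        have : (⇑B)^[τ] = ⇑(B ^ τ) := funext fun v => aux_hpow B τ v
        rw [this]
        exact (B ^ τ).continuous
      exact (hBc.tendsto _).comp h1
    have hlim : Tendsto (fun m => dist ((⇑B)^[τ] (p m - p k)) 0) atTop
        (nhds (dist ((⇑B)^[τ] (z - p k)) 0)) := hcont.dist tendsto_const_nhds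
    refine le_of_tendsto hlim ?_
    filter_upwards [eventually_ge_atTop k] with m hmk
    have := hm m hmk
    have := hpos m
    linarith
  have hbigz : ∀ k : ℕ, ε/8 - (1/2:ℝ)^(k+1) ≤ dist ((⇑B)^[s (k+1)] z) 0 := by
    intro k
    have hτT : ∀ j, k+1 ≤ j → s (k+1) ∈ T j := fun j hj => (hmemT j (k+1) (by omega) hj).1
    have htl := htail (k+1) (s (k+1)) hτT
    have hsplit : (⇑B)^[s (k+1)] (p (k+1))
        = (⇑B)^[s (k+1)] z - (⇑B)^[s (k+1)] (z - p (k+1)) := by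
      rw [aux_hpow, aux_hpow, aux_hpow, ← map_sub]
      congr 1
      abel
    have htri : dist ((⇑B)^[s (k+1)] (p (k+1))) 0
        ≤ dist ((⇑B)^[s (k+1)] z) 0 + dist ((⇑B)^[s (k+1)] (z - p (k+1))) 0 := by
      rw [hsplit]
      exact aux_dist_sub_le hinv _ _
    have := hsbig k
    linarith
  have hsmallz : ∀ k : ℕ, dist ((⇑B)^[t (k+1)] z) 0 ≤ (1/2:ℝ)^k := by
    intro k
    have hτT : ∀ j, k+1 ≤ j → t (k+1) ∈ T j := fun j hj => (hmemT j (k+1) (by omega) hj).2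
    have htl := htail (k+1) (t (k+1)) hτT
    have hsplit : (⇑B)^[t (k+1)] z
        = (⇑B)^[t (k+1)] (p (k+1)) + (⇑B)^[t (k+1)] (z - p (k+1)) := by
      rw [aux_hpow, aux_hpow, aux_hpow, ← map_add]
      congr 1
      abel
    have htri : dist ((⇑B)^[t (k+1)] z) 0
        ≤ dist ((⇑B)^[t (k+1)] (p (k+1))) 0 + dist ((⇑B)^[t (k+1)] (z - p (k+1))) 0 := by
      rw [hsplit]
      exact aux_dist_add_le hinv _ _
    have h1 := htsmall k
    have hps : (1/2:ℝ)^(k+1) = (1/2:ℝ)^k * (1/2) := pow_succ _ _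
    nlinarith [hpos k]
  refine ⟨z, ?_, ?_⟩
  · -- liminf is zero
    refine aux_liminf_zero_of_tendsto (t := fun k => t (k+1)) ?_ ?_
    · refine tendsto_atTop_mono (fun k => ?_) tendsto_id
      have := htge k
      simp only [id]
      omega
    · rw [tendsto_iff_dist_tendsto_zero]
      refine squeeze_zero (fun k => dist_nonneg) hsmallz ?_
      exact tendsto_pow_atTop_nhds_zero_of_lt_one (by norm_num) (by norm_num)
  · -- orbit does not converge to zero
    intro hT'
    rw [Metric.tendsto_atTop] at hT'
    obtain ⟨N, hN⟩ := hT' (ε/16) (by linarith)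
    obtain ⟨K, hK⟩ := exists_pow_lt_of_lt_one (show (0:ℝ) < ε/16 by linarith)
      (by norm_num : (1/2:ℝ) < 1)
    set k := max K N with hkdef
    have h1 := hbigz k
    have h2 : (1/2:ℝ)^(k+1) ≤ (1/2:ℝ)^K := by
      apply pow_le_pow_of_le_one (by norm_num) (by norm_num)
      omega
    have h3 : N ≤ s (k+1) := le_trans (le_trans (le_max_right _ _) (Nat.le_succ _)) (hsge k)
    have h4 := hN (s (k+1)) h3
    linarith

end Backward

section Scrambled

variable {𝕂 X : Type} [RCLike 𝕂] [AddCommGroup X] [Module 𝕂 X]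
    [MetricSpace X] [CompleteSpace X] [ContinuousAdd X] [ContinuousSMul 𝕂 X]
    [Module ℝ X] [IsScalarTower ℝ 𝕂 X]
variable (hinv : ∀ x y z : X, dist (x + z) (y + z) = dist x y)
variable (B : X →L[𝕂] X)

lemma aux_edist_tendsto {f : ℕ → X} {x0 : X}
    (h : Tendsto (fun n => edist (f n) x0) atTop (nhds 0)) :
    Tendsto f atTop (nhds x0) := by
  rw [tendsto_iff_dist_tendsto_zero]
  have hc : Tendsto ENNReal.toReal (nhds 0) (nhds (ENNReal.toReal 0)) :=
    ENNReal.tendsto_toReal (by simp)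
  have := hc.comp h
  simp only [ENNReal.toReal_zero] at this
  convert this using 2 with n
  simp only [Function.comp_apply]
  rw [dist_edist]

include hinv in
lemma aux_scrambled (z : X)
    (h1 : liminf (fun n => edist ((⇑B)^[n] z) 0) atTop = 0)
    (h2 : ¬ Tendsto (fun n : ℕ => (⇑B)^[n] z) atTop (nhds 0)) :
    LiYorkeChaotic (⇑B) := by
  have hpow : ∀ (n : ℕ) (v : X), (⇑B)^[n] v = (B ^ n) v := fun n v => by
    rw [FunLike.coe_pow_eq_iterate]
  have hz0 : z ≠ 0 := by
    rintro rfl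
    apply h2
    have : ∀ n : ℕ, (⇑B)^[n] (0 : X) = 0 := fun n => by rw [hpow, map_zero]
    simp only [this]
    exact tendsto_const_nhds
  have hinj : Function.Injective (fun cR : ℝ => cR • z) := by
    intro a b hab
    by_contra hne
    simp only at hab
    have hsub : (a - b) • z = 0 := by rw [sub_smul, hab, sub_self]
    have : z = 0 := by
      have h3 := congrArg (fun v => (a - b)⁻¹ • v) hsub
      simpa [inv_smul_smul₀ (sub_ne_zero.mpr hne)] using h3
    exact hz0 this
  obtain ⟨φ, hφm, hφt⟩ := aux_subseq_of_liminf_zero h1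
  refine ⟨Set.range (fun cR : ℝ => cR • z), ?_, ?_⟩
  · intro hcount
    have hpre := hcount.preimage hinj
    rw [Set.preimage_range] at hpre
    exact Cardinal.not_countable_real hpre
  · rintro a ⟨ca, rfl⟩ b ⟨cb, rfl⟩ hab
    have hcc : ca ≠ cb := fun h => hab (by rw [h])
    set μ : 𝕂 := algebraMap ℝ 𝕂 (ca - cb) with hμdef
    have hμ : μ ≠ 0 := by
      intro h
      have h0 : ca - cb = 0 := (algebraMap ℝ 𝕂).injective (by rw [map_zero]; exact h)
      exact hcc (sub_eq_zero.mp h0)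
    have keyedist : ∀ n : ℕ, edist ((⇑B)^[n] (ca • z)) ((⇑B)^[n] (cb • z))
        = edist (μ • (⇑B)^[n] z) 0 := by
      intro n
      rw [aux_edist_sub hinv]
      congr 1
      rw [hpow, hpow, hpow]
      rw [(B ^ n).map_smul_of_tower, (B ^ n).map_smul_of_tower]
      rw [← sub_smul, hμdef, algebraMap_smul]
    constructor
    · simp only [keyedist]
      refine aux_liminf_zero_of_tendsto (t := φ) hφm.tendsto_atTop ?_
      have := hφt.const_smul μ
      simpa using this
    · simp only [keyedist]
      by_contra hns
      push_neg at hns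
      have hls : limsup (fun n => edist (μ • (⇑B)^[n] z) 0) atTop = 0 :=
        le_antisymm hns (zero_le)
      have hli : liminf (fun n => edist (μ • (⇑B)^[n] z) 0) atTop = 0 :=
        le_antisymm (le_trans liminf_le_limsup hns) (zero_le)
      have htd : Tendsto (fun n => edist (μ • (⇑B)^[n] z) 0) atTop (nhds 0) :=
        tendsto_of_liminf_eq_limsup hli hls
      have hXt : Tendsto (fun n : ℕ => μ • (⇑B)^[n] z) atTop (nhds 0) :=
        aux_edist_tendsto htd
      apply h2
      have := hXt.const_smul μ⁻¹
      simp only [inv_smul_smul₀ hμ, smul_zero] at this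
      exact this

end Scrambled

section Assembly

variable {𝕂 X : Type} [RCLike 𝕂] [AddCommGroup X] [Module 𝕂 X]
    [MetricSpace X] [CompleteSpace X] [ContinuousAdd X] [ContinuousSMul 𝕂 X]
    [Module ℝ X] [IsScalarTower ℝ 𝕂 X] [LocallyConvexSpace ℝ X]
variable (hinv : ∀ x y z : X, dist (x + z) (y + z) = dist x y)
variable (ι : X →L[𝕂] (ℤ → 𝕂)) (hι : Function.Injective ι)
variable (E : ℤ → X) (hE : ∀ n, ι (E n) = Pi.single n 1)
variable (hbasis : ∀ x : X,
      Tendsto (fun N : ℕ => ∑ m ∈ Finset.Icc (-(N : ℤ)) (N : ℤ), ι x m • E m)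
        atTop (nhds x))
variable (w : ℤ → 𝕂) (hw0 : ∀ n, w n ≠ 0)
variable (B : X →L[𝕂] X) (hB : ∀ (x : X) (n : ℤ), ι (B x) n = w n * ι x (n + 1))

include hinv hι hE hbasis hw0 hB in
lemma aux_backward
    (ha : ∃ n : ℕ → ℕ, StrictMono n ∧
        Tendsto (fun i : ℕ =>
            (∏ t ∈ Finset.Icc (-(n i : ℤ)) (-1), w t) • E (-(n i : ℤ)))
          atTop (nhds 0))
    (hb : ∃ x : X, ¬ Tendsto (fun n : ℕ => (⇑B)^[n] x) atTop (nhds 0)) :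
    LiYorkeChaotic (⇑B) := by
  haveI := aux_topAddGroup (X := X) hinv
  have hpow : ∀ (n : ℕ) (v : X), (⇑B)^[n] v = (B ^ n) v := fun n v => by
    rw [FunLike.coe_pow_eq_iterate]
  obtain ⟨n, hmono, htend⟩ := ha
  have hE0orbit : ∀ i : ℕ, (⇑B)^[n i] (E 0)
      = (∏ t ∈ Finset.Icc (-(n i : ℤ)) (-1), w t) • E (-(n i : ℤ)) := by
    intro i
    rw [hpow, aux_pow_E ι E w B hι hE hB (n i) 0]
    norm_num
  by_cases hE0 : Tendsto (fun m : ℕ => (⇑B)^[m] (E 0)) atTop (nhds 0)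
  · -- the whole orbit of `E 0` goes to zero: use the recursive construction
    obtain ⟨x₀, hx₀⟩ := hb
    obtain ⟨z, hz1, hz2⟩ := aux_construct hinv ι hι E hE hbasis w hw0 B hB hE0 x₀ hx₀
    exact aux_scrambled hinv B z hz1 hz2
  · -- `E 0` is itself a semi-irregular vector
    refine aux_scrambled hinv B (E 0) ?_ hE0
    refine aux_liminf_zero_of_tendsto (t := n) hmono.tendsto_atTop ?_
    simp only [hE0orbit]
    exact htend

end Assembly

theorem bilateral_shift_frechet_liYorke_iff
    {𝕂 X : Type} [RCLike 𝕂] [AddCommGroup X] [Module 𝕂 X]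
    [MetricSpace X] [CompleteSpace X] [ContinuousAdd X] [ContinuousSMul 𝕂 X]
    [Module ℝ X] [IsScalarTower ℝ 𝕂 X] [LocallyConvexSpace ℝ X]
    (hinv : ∀ x y z : X, dist (x + z) (y + z) = dist x y)
    -- `X` is a Fréchet sequence space over `ℤ`
    (ι : X →L[𝕂] (ℤ → 𝕂)) (hι : Function.Injective ι)
    -- the canonical vectors belong to `X` and form a basis
    (E : ℤ → X) (hE : ∀ n, ι (E n) = Pi.single n 1)
    (hbasis : ∀ x : X,
      Tendsto (fun N : ℕ => ∑ m ∈ Finset.Icc (-(N : ℤ)) (N : ℤ), ι x m • E m)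
        atTop (nhds x))
    (w : ℤ → 𝕂) (hw0 : ∀ n, w n ≠ 0)
    (B : X →L[𝕂] X) (hB : ∀ (x : X) (n : ℤ), ι (B x) n = w n * ι x (n + 1)) :
    LiYorkeChaotic (⇑B) ↔
      ((∃ n : ℕ → ℕ, StrictMono n ∧
          Tendsto (fun i : ℕ =>
              (∏ t ∈ Finset.Icc (-(n i : ℤ)) (-1), w t) • E (-(n i : ℤ)))
            atTop (nhds 0)) ∧
        ∃ x : X, ¬ Tendsto (fun n : ℕ => (⇑B)^[n] x) atTop (nhds 0)) := by
  constructor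
  · exact aux_forward hinv ι hι E hE hbasis w hw0 B hB
  · intro h
    exact aux_backward hinv ι hι E hE hbasis w hw0 B hB h.1 h.2
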